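/- Let F be a field with char(F) > d or char(F) = 0. Let f = Σ_{i=1}^s ∏_{j=1}^d L_{i,j} be a sum of products of homogeneous linear forms in F[x_1,...,x_n], and let f^{nc} = Σ_{i=1}^s Σ_{σ ∈ S_d} L_{i,σ(1)} L_{i,σ(2)} ⋯ L_{i,σ(d)} be the corresponding noncommutative polynomial in F⟨X_1,...,X_n⟩ (multiplication in the free algebra, linear forms lifted with the same coefficients). Then f ≡ 0 if and only if f^{nc} ≡ 0. -/

import Mathlib

open MvPolynomial Finset

/-- The (commutative) linear form `L = ∑ i, a i * x i`. -/
noncomputable def lin {F : Type*} [Field F] {n : ℕ} (a : Fin n → F) :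
    MvPolynomial (Fin n) F :=
  ∑ i, MvPolynomial.C (a i) * MvPolynomial.X i

/-- The lift of the linear form with coefficients `a` to the free (noncommutative)
algebra, realized as `MonoidAlgebra F (FreeMonoid (Fin n))`. -/
noncomputable def linNC {F : Type*} [Field F] {n : ℕ} (a : Fin n → F) :
    MonoidAlgebra F (FreeMonoid (Fin n)) :=
  ∑ i, MonoidAlgebra.single (FreeMonoid.of i) (a i)



/-- exponent multiset of a tuple -/
noncomputable def mu {n d : ℕ} (k : Fin d → Fin n) : Fin n →₀ ℕ :=
  ∑ j, Finsupp.single (k j) 1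

lemma mu_eq_toFinsupp {n d : ℕ} (k : Fin d → Fin n) :
    mu k = Multiset.toFinsupp (Multiset.map k Finset.univ.val) := by
  classical
  rw [show Multiset.map k Finset.univ.val = ∑ j : Fin d, ({k j} : Multiset (Fin n)) by
    rw [Finset.sum_eq_multiset_sum]
    rw [show Multiset.map (fun j => ({k j} : Multiset (Fin n))) Finset.univ.val
        = Multiset.map (fun a => ({a} : Multiset (Fin n))) (Multiset.map k Finset.univ.val) by
      rw [Multiset.map_map]; rfl]
    rw [Multiset.sum_map_singleton]]
  rw [map_sum]
  simp [mu, Multiset.toFinsupp_singleton]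

lemma mu_comp_perm {n d : ℕ} (k : Fin d → Fin n) (σ : Equiv.Perm (Fin d)) :
    mu (k ∘ σ) = mu k := by
  unfold mu
  exact Equiv.sum_comp σ (fun j => Finsupp.single (k j) 1)

lemma exists_comp_perm {n d : ℕ} {k k' : Fin d → Fin n} (h : mu k = mu k') :
    ∃ σ : Equiv.Perm (Fin d), k' ∘ σ = k := by
  have hp : List.Perm (List.ofFn k) (List.ofFn k') := by
    rw [← Multiset.coe_eq_coe, ← Fin.univ_val_map, ← Fin.univ_val_map]
    exact Multiset.toFinsupp.injective (by rw [← mu_eq_toFinsupp, ← mu_eq_toFinsupp, h])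
  refine ⟨Tuple.sort k' * (Tuple.sort k)⁻¹, ?_⟩
  have h1 : k ∘ Tuple.sort k = k' ∘ Tuple.sort k' := by
    apply List.ofFn_injective
    exact List.Perm.eq_of_sortedLE
      ((Tuple.monotone_sort k).sortedLE_ofFn) ((Tuple.monotone_sort k').sortedLE_ofFn)
      (((Tuple.sort k).ofFn_comp_perm k).trans (hp.trans
        (((Tuple.sort k').ofFn_comp_perm k').symm)))
  funext x
  simp only [Function.comp_apply, Equiv.Perm.mul_apply]
  have := congrFun h1 ((Tuple.sort k)⁻¹ x)
  simp only [Function.comp_apply] at this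
  rw [← this]; simp

lemma prod_monomial {ι σ' : Type*} {R : Type*} [CommSemiring R] (s : Finset ι)
    (t : ι → σ' →₀ ℕ) (c : ι → R) :
    ∏ i ∈ s, MvPolynomial.monomial (t i) (c i)
      = MvPolynomial.monomial (∑ i ∈ s, t i) (∏ i ∈ s, c i) := by
  classical
  induction s using Finset.induction with
  | empty => simp
  | insert _ _ h ih =>
      rw [Finset.prod_insert h, Finset.sum_insert h, Finset.prod_insert h, ih, monomial_mul]

lemma comm_expand {F : Type*} [Field F] {n d s : ℕ} (a : Fin s → Fin d → Fin n → F) :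
    (∑ i, ∏ j, lin (a i j))
      = ∑ k : Fin d → Fin n,
          MvPolynomial.monomial (mu k) (∑ i, ∏ j, a i j (k j)) := by
  have h1 : ∀ i, ∏ j, lin (a i j)
      = ∑ k : Fin d → Fin n, MvPolynomial.monomial (mu k) (∏ j, a i j (k j)) := by
    intro i
    unfold lin
    rw [Finset.prod_univ_sum]
    rw [Fintype.piFinset_univ]
    refine Finset.sum_congr rfl fun k _ => ?_
    simp_rw [C_mul_X_eq_monomial]
    rw [prod_monomial]
    rfl
  simp_rw [h1, map_sum]
  rw [Finset.sum_comm]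
lemma prod_linNC {F : Type*} [Field F] {n : ℕ} :
    ∀ {m : ℕ} (b : Fin m → Fin n → F),
    (List.ofFn fun j => linNC (b j)).prod
      = ∑ k : Fin m → Fin n,
          MonoidAlgebra.single (FreeMonoid.ofList (List.ofFn k)) (∏ j, b j (k j)) := by
  intro m
  induction m with
  | zero =>
      intro b
      rw [Fintype.sum_unique]
      simp [List.ofFn_zero, FreeMonoid.ofList_nil, MonoidAlgebra.one_def]
  | succ m ih =>
      intro b
      rw [List.ofFn_succ, List.prod_cons, ih (fun j => b j.succ)]
      rw [← Equiv.sum_comp (Fin.consEquiv (fun _ => Fin n))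
        (fun k => MonoidAlgebra.single (FreeMonoid.ofList (List.ofFn k))
          (∏ j, b j (k j))), Fintype.sum_prod_type]
      simp only [Fin.consEquiv, Equiv.coe_fn_mk]
      unfold linNC
      rw [Finset.sum_mul]
      refine Finset.sum_congr rfl fun i _ => ?_
      rw [Finset.mul_sum]
      refine Finset.sum_congr rfl fun k _ => ?_
      rw [MonoidAlgebra.single_mul_single]
      congr 1
      · rw [List.ofFn_succ]
        simp [FreeMonoid.ofList_cons]
      · rw [Fin.prod_univ_succ]
        simp

lemma nc_expand {F : Type*} [Field F] {n d s : ℕ} (a : Fin s → Fin d → Fin n → F) :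
    (∑ i : Fin s, ∑ σ : Equiv.Perm (Fin d),
        (List.ofFn fun j => linNC (a i (σ j))).prod)
      = ∑ k : Fin d → Fin n,
          MonoidAlgebra.single (FreeMonoid.ofList (List.ofFn k))
            (∑ i, ∑ σ : Equiv.Perm (Fin d), ∏ j, a i (σ j) (k j)) := by
  classical
  simp_rw [prod_linNC]
  simp_rw [← MonoidAlgebra.singleAddHom_apply, map_sum]
  rw [show (∑ i : Fin s, ∑ σ : Equiv.Perm (Fin d), ∑ k : Fin d → Fin n,
      (MonoidAlgebra.singleAddHom (FreeMonoid.ofList (List.ofFn k)) : F →+ _)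
        (∏ j, a i (σ j) (k j)))
    = ∑ i : Fin s, ∑ k : Fin d → Fin n, ∑ σ : Equiv.Perm (Fin d),
      (MonoidAlgebra.singleAddHom (FreeMonoid.ofList (List.ofFn k)) : F →+ _)
        (∏ j, a i (σ j) (k j)) from
    Finset.sum_congr rfl fun i _ => Finset.sum_comm]
  exact Finset.sum_comm

lemma key_count {F : Type*} [Field F] {n d s : ℕ} (a : Fin s → Fin d → Fin n → F)
    (k₀ : Fin d → Fin n) :
    (∑ i, ∑ σ : Equiv.Perm (Fin d), ∏ j, a i (σ j) (k₀ j))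
      = (Finset.univ.filter fun σ : Equiv.Perm (Fin d) => k₀ ∘ σ = k₀).card •
        ∑ k ∈ Finset.univ.filter (fun k : Fin d → Fin n => mu k = mu k₀),
          ∑ i, ∏ j, a i j (k j) := by
  classical
  rw [Finset.sum_comm]
  have h1 : (∑ σ : Equiv.Perm (Fin d), ∑ i, ∏ j, a i (σ j) (k₀ j))
      = ∑ σ : Equiv.Perm (Fin d), ∑ i, ∏ j, a i j ((k₀ ∘ σ) j) := by
    rw [← Equiv.sum_comp (Equiv.inv (Equiv.Perm (Fin d)))
      (fun σ : Equiv.Perm (Fin d) => ∑ i, ∏ j, a i j ((k₀ ∘ σ) j))]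
    refine Finset.sum_congr rfl fun σ _ => Finset.sum_congr rfl fun i _ => ?_
    rw [← Equiv.prod_comp σ
      (fun j => a i j ((k₀ ∘ ((Equiv.inv (Equiv.Perm (Fin d))) σ)) j))]
    refine Finset.prod_congr rfl fun j _ => ?_
    simp
  rw [h1]
  rw [Finset.sum_comp (fun k : Fin d → Fin n => ∑ i, ∏ j, a i j (k j))
    (fun σ : Equiv.Perm (Fin d) => k₀ ∘ σ)]
  have himage : Finset.univ.image (fun σ : Equiv.Perm (Fin d) => k₀ ∘ σ)
      = Finset.univ.filter (fun k : Fin d → Fin n => mu k = mu k₀) := by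
    ext b
    simp only [Finset.mem_image, Finset.mem_filter, Finset.mem_univ, true_and]
    constructor
    · rintro ⟨σ, rfl⟩
      exact mu_comp_perm k₀ σ
    · intro h
      exact exists_comp_perm h
  rw [himage, Finset.smul_sum]
  refine Finset.sum_congr rfl fun b hb => ?_
  rw [Finset.mem_filter] at hb
  obtain ⟨σ₀, hσ₀⟩ := exists_comp_perm hb.2
  congr 1
  refine Finset.card_nbij' (fun σ => σ * σ₀⁻¹) (fun σ => σ * σ₀) ?_ ?_ ?_ ?_
  · intro σ hσ
    simp only [Finset.coe_filter, Set.mem_setOf_eq] at hσ ⊢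
    refine ⟨Finset.mem_univ _, funext fun x => ?_⟩
    calc k₀ ((σ * σ₀⁻¹) x) = (k₀ ∘ σ) (σ₀⁻¹ x) := rfl
      _ = (k₀ ∘ σ₀) (σ₀⁻¹ x) := by rw [hσ.2, hσ₀]
      _ = k₀ x := by simp
  · intro σ hσ
    simp only [Finset.coe_filter, Set.mem_setOf_eq] at hσ ⊢
    refine ⟨Finset.mem_univ _, funext fun x => ?_⟩
    calc k₀ ((σ * σ₀) x) = (k₀ ∘ σ) (σ₀ x) := rfl
      _ = (k₀ ∘ σ₀) x := by rw [hσ.2]; rfl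
      _ = b x := by rw [hσ₀]
  · intro σ _
    group
  · intro σ _
    group

lemma stab_card_ne_zero {F : Type*} [Field F] {n d : ℕ}
    (hchar : ringChar F = 0 ∨ d < ringChar F) (k₀ : Fin d → Fin n) :
    (((Finset.univ.filter fun σ : Equiv.Perm (Fin d) => k₀ ∘ σ = k₀).card : F)) ≠ 0 := by
  classical
  set S : Subgroup (Equiv.Perm (Fin d)) :=
    { carrier := {σ | k₀ ∘ σ = k₀}
      mul_mem' := by
        intro σ τ hσ hτ
        funext x
        calc k₀ ((σ * τ) x) = (k₀ ∘ σ) (τ x) := rfl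
          _ = (k₀ ∘ τ) x := by rw [hσ]; rfl
          _ = k₀ x := by rw [hτ]
      one_mem' := rfl
      inv_mem' := by
        intro σ hσ
        funext x
        calc k₀ (σ⁻¹ x) = (k₀ ∘ σ) (σ⁻¹ x) := by rw [hσ]
          _ = k₀ x := by simp } with hS
  have hmem : ∀ σ : Equiv.Perm (Fin d), σ ∈ S ↔ k₀ ∘ σ = k₀ := fun σ => Iff.rfl
  have hcard : (Finset.univ.filter fun σ : Equiv.Perm (Fin d) => k₀ ∘ σ = k₀).card
      = Nat.card S := by
    rw [Nat.card_eq_fintype_card, Fintype.card_subtype]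
    congr 1
    exact Finset.filter_congr (fun σ _ => by simp only [hmem σ])
  have hdvd : Nat.card S ∣ Nat.factorial d := by
    have := Subgroup.card_subgroup_dvd_card S
    rwa [Nat.card_eq_fintype_card (α := Equiv.Perm (Fin d)), Fintype.card_perm,
      Fintype.card_fin] at this
  rcases hchar with h0 | hlt
  · have : CharZero F := (CharP.ringChar_zero_iff_CharZero (R := F)).mp h0
    have hpos : 0 < (Finset.univ.filter fun σ : Equiv.Perm (Fin d) => k₀ ∘ σ = k₀).card :=
      Finset.card_pos.mpr ⟨1, by simp [Finset.mem_filter]⟩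
    exact Nat.cast_ne_zero.mpr hpos.ne'
  · intro hzero
    have hp : ringChar F ∣ (Finset.univ.filter fun σ : Equiv.Perm (Fin d) => k₀ ∘ σ = k₀).card :=
      (ringChar.spec F _).mp hzero
    have hprime : (ringChar F).Prime :=
      (CharP.char_is_prime_or_zero F (ringChar F)).resolve_right (by omega)
    have hdf : ringChar F ∣ Nat.factorial d := hp.trans (hcard ▸ hdvd)
    exact absurd ((Nat.Prime.dvd_factorial hprime).mp hdf) (by omega)

lemma coeff_formula {F : Type*} [Field F] {n d : ℕ} (g : (Fin d → Fin n) → F)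
    (m : Fin n →₀ ℕ) :
    MvPolynomial.coeff m (∑ k : Fin d → Fin n, MvPolynomial.monomial (mu k) (g k))
      = ∑ k ∈ Finset.univ.filter (fun k : Fin d → Fin n => mu k = m), g k := by
  classical
  rw [MvPolynomial.coeff_sum]
  simp_rw [MvPolynomial.coeff_monomial]
  rw [Finset.sum_filter]

theorem comm_zero_iff_noncomm_zero {F : Type*} [Field F] {n d s : ℕ}
    (hchar : ringChar F = 0 ∨ d < ringChar F)
    (a : Fin s → Fin d → Fin n → F) :
    (∑ i, ∏ j, lin (a i j)) = 0 ↔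
    (∑ i : Fin s, ∑ σ : Equiv.Perm (Fin d),
        (List.ofFn fun j => linNC (a i (σ j))).prod) = 0 := by
  classical
  rw [comm_expand a, nc_expand a]
  constructor
  · intro h
    refine Finset.sum_eq_zero fun k _ => ?_
    have h0 : (∑ k' ∈ Finset.univ.filter (fun k' : Fin d → Fin n => mu k' = mu k),
        ∑ i, ∏ j, a i j (k' j)) = 0 := by
      rw [← coeff_formula (fun k' => ∑ i, ∏ j, a i j (k' j)) (mu k), h,
        MvPolynomial.coeff_zero]
    rw [key_count a k, h0, smul_zero]
    exact MonoidAlgebra.single_zero _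
  · intro h
    have hc : ∀ k : Fin d → Fin n,
        (∑ i, ∑ σ : Equiv.Perm (Fin d), ∏ j, a i (σ j) (k j)) = 0 := by
      intro k₀
      have := congrArg
        (fun x : MonoidAlgebra F (FreeMonoid (Fin n)) =>
          x.coeff (FreeMonoid.ofList (List.ofFn k₀))) h
      simp only [MonoidAlgebra.coeff_zero, MonoidAlgebra.coeff_sum, MonoidAlgebra.coeff_single,
        Finsupp.coe_zero, Pi.zero_apply] at this
      rw [Finsupp.finset_sum_apply] at this
      rw [Finset.sum_eq_single k₀ (fun k _ hk => ?_) (fun hk => ?_)] at this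
      · rwa [Finsupp.single_eq_same] at this
      · rw [Finsupp.single_apply, if_neg]
        intro he
        exact hk (List.ofFn_injective (FreeMonoid.ofList.injective he))
      · exact absurd (Finset.mem_univ k₀) hk
    have hg : ∀ k : Fin d → Fin n,
        (∑ k' ∈ Finset.univ.filter (fun k' : Fin d → Fin n => mu k' = mu k),
          ∑ i, ∏ j, a i j (k' j)) = 0 := by
      intro k
      have := hc k
      rw [key_count a k] at this
      rw [nsmul_eq_mul] at this
      exact (mul_eq_zero.mp this).resolve_left (stab_card_ne_zero hchar k)
    apply MvPolynomial.ext
    intro m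
    rw [coeff_formula, MvPolynomial.coeff_zero]
    by_cases hne : (Finset.univ.filter (fun k : Fin d → Fin n => mu k = m)).Nonempty
    · obtain ⟨k₀, hk₀⟩ := hne
      rw [Finset.mem_filter] at hk₀
      rw [← hk₀.2]
      exact hg k₀
    · rw [Finset.not_nonempty_iff_eq_empty] at hne
      rw [hne, Finset.sum_empty]
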